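/- For the map F(h,a,b,c) = (h cos(nb), h sin(nb)) on M = S² × S¹ × S¹ with h ∈ [1,2], the image F(M) is the closed annulus {v ∈ ℝ² : 1 ≤ |v| ≤ 2}, and the fiber over any point v with 1 < |v| < 2 has exactly n connected components (each diffeomorphic to a 2-torus). -/

import Mathlib

open Real Set

noncomputable section

instance : ConnectedSpace Real.Angle :=
  inferInstanceAs (ConnectedSpace (AddCircle (2 * π)))

lemma angle_eq_of_cos_sin {θ ψ : Real.Angle} (hc : θ.cos = ψ.cos) (hs : θ.sin = ψ.sin) :
    θ = ψ := by
  induction θ using Real.Angle.induction_on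
  induction ψ using Real.Angle.induction_on
  rw [Real.Angle.cos_coe, Real.Angle.cos_coe] at hc
  rw [Real.Angle.sin_coe, Real.Angle.sin_coe] at hs
  exact Real.Angle.cos_sin_inj hc hs

lemma finite_preconnected_subsingleton {X : Type*} [TopologicalSpace X] [T1Space X]
    {s : Set X} (hs : s.Finite) (hc : IsPreconnected s) : s.Subsingleton := by
  haveI := hs.to_subtype
  haveI : PreconnectedSpace s := Subtype.preconnectedSpace hc
  have h : (univ : Set s).Subsingleton :=
    TotallyDisconnectedSpace.isTotallyDisconnected_univ univ (subset_refl _) isPreconnected_univ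
  intro a ha b hb
  exact congrArg Subtype.val (h (mem_univ (⟨a, ha⟩ : s)) (mem_univ ⟨b, hb⟩))

lemma card_solutions (n : ℕ) (hn : 0 < n) (ψ : Real.Angle) :
    Nat.card {b : Real.Angle // n • b = ψ} = n := by
  have hπ : (0:ℝ) < 2 * π := by positivity
  set ψ₀ : ℝ := ψ.toReal with hψ₀
  have hψc : (ψ₀ : Real.Angle) = ψ := ψ.coe_toReal
  have hnR : (n : ℝ) ≠ 0 := Nat.cast_ne_zero.mpr hn.ne'
  have key : ∀ k : Fin n, n • (((ψ₀ + 2 * π * k) / n : ℝ) : Real.Angle) = ψ := by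
    intro k
    rw [← Real.Angle.coe_nsmul, nsmul_eq_mul, mul_div_cancel₀ _ hnR, ← hψc,
      Real.Angle.angle_eq_iff_two_pi_dvd_sub]
    exact ⟨k, by push_cast; ring⟩
  have hcard : Nat.card (Fin n) = n := by simp
  refine Eq.trans (Nat.card_congr ?_) hcard
  refine (Equiv.ofBijective
    (fun k : Fin n => (⟨(((ψ₀ + 2 * π * k) / n : ℝ) : Real.Angle), key k⟩ :
      {b : Real.Angle // n • b = ψ})) ⟨?_, ?_⟩).symm
  · intro k j hkj
    have h1 : ((((ψ₀ + 2 * π * k) / n : ℝ) : Real.Angle)) = (((ψ₀ + 2 * π * j) / n : ℝ)) :=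
      congrArg Subtype.val hkj
    rw [Real.Angle.angle_eq_iff_two_pi_dvd_sub] at h1
    obtain ⟨m, hm⟩ := h1
    field_simp at hm
    have h3 : (k : ℝ) - j = m * n := by
      have h2 : 2 * π * ((k : ℝ) - j) = 2 * π * (m * n) := by ring_nf; ring_nf at hm; linarith
      have := mul_left_cancel₀ (ne_of_gt hπ) h2
      linarith
    have h4 : ((k : ℤ) - j) = m * n := by exact_mod_cast h3
    have hdvd : (n : ℤ) ∣ (k : ℤ) - j := ⟨m, by linarith [h4]⟩
    have hk := k.isLt; have hj := j.isLt
    have h0 : (k : ℤ) - j = 0 := Int.eq_zero_of_abs_lt_dvd hdvd (by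
      rcases abs_cases ((k : ℤ) - j) with ⟨h, _⟩ | ⟨h, _⟩ <;> omega)
    exact Fin.ext (by omega)
  · rintro ⟨b, hb⟩
    set β : ℝ := b.toReal with hβ
    have hβc : (β : Real.Angle) = b := b.coe_toReal
    have hcoe : ((n • β : ℝ) : Real.Angle) = (ψ₀ : Real.Angle) := by
      rw [Real.Angle.coe_nsmul, hβc, hb, hψc]
    rw [Real.Angle.angle_eq_iff_two_pi_dvd_sub] at hcoe
    obtain ⟨m, hm⟩ := hcoe
    have h0 : 0 ≤ m % n := Int.emod_nonneg m (by exact_mod_cast hn.ne')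
    have h1 : m % n < n := Int.emod_lt_of_pos m (by exact_mod_cast hn)
    refine ⟨⟨(m % n).toNat, by omega⟩, ?_⟩
    apply Subtype.ext
    show ((((ψ₀ + 2 * π * (((m % ↑n).toNat : ℕ) : ℝ)) / n : ℝ) : Real.Angle)) = b
    rw [← hβc, Real.Angle.angle_eq_iff_two_pi_dvd_sub]
    refine ⟨-(m / n), ?_⟩
    have hmn : (((m % ↑n).toNat : ℕ) : ℝ) = ((m % ↑n : ℤ) : ℝ) := by
      exact_mod_cast congrArg (Int.cast : ℤ → ℝ) (Int.toNat_of_nonneg h0)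
    have hmod : ((m % ↑n : ℤ) : ℝ) = (m : ℝ) - (n : ℝ) * ((m / ↑n : ℤ) : ℝ) := by
      rw [Int.emod_def]; push_cast; ring
    have hβval : β = (ψ₀ + 2 * π * m) / n := by
      have : (n • β : ℝ) - ψ₀ = 2 * π * m := hm
      rw [nsmul_eq_mul] at this
      field_simp
      linarith
    rw [hmn, hmod, hβval]
    field_simp
    push_cast
    ring


/-- Example 3.9 of the paper: for `F(h,a,b,c) = (h cos(nb), h sin(nb))` on
`M = [1,2] × S¹ × S¹ × S¹` (the coordinates `(h, a)` on `S²` and `(b, c)` on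
`S¹ × S¹`), the image `F(M)` is the closed annulus `{1 ≤ |v| ≤ 2}` and the fiber over
any point `v` with `1 < |v| < 2` has exactly `n` connected components, each
homeomorphic to a 2-torus. -/
theorem annulus_system_image_and_fibers
    (n : ℕ) (hn : 0 < n)
    (F : (Set.Icc (1:ℝ) 2 × Real.Angle × Real.Angle × Real.Angle) → ℝ × ℝ)
    (hF : F = fun p => ((p.1 : ℝ) * Real.Angle.cos (n • p.2.2.1),
                        (p.1 : ℝ) * Real.Angle.sin (n • p.2.2.1))) :
    Set.range F =
      {v : ℝ × ℝ | 1 ≤ Real.sqrt (v.1 ^ 2 + v.2 ^ 2) ∧ Real.sqrt (v.1 ^ 2 + v.2 ^ 2) ≤ 2}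
    ∧ ∀ v : ℝ × ℝ, 1 < Real.sqrt (v.1 ^ 2 + v.2 ^ 2) → Real.sqrt (v.1 ^ 2 + v.2 ^ 2) < 2 →
        Nat.card (ConnectedComponents ↥(F ⁻¹' {v})) = n
        ∧ ∀ x ∈ F ⁻¹' {v},
            Nonempty (↥(connectedComponentIn (F ⁻¹' {v}) x) ≃ₜ (Real.Angle × Real.Angle)) := by
  subst hF
  have hnR : (n : ℝ) ≠ 0 := Nat.cast_ne_zero.mpr hn.ne'
  -- generic facts about points with `1 ≤ r`
  have habs : ∀ v : ℝ × ℝ, ‖(⟨v.1, v.2⟩ : ℂ)‖ = Real.sqrt (v.1 ^ 2 + v.2 ^ 2) := by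
    intro v
    rw [Complex.norm_def, Complex.normSq_mk]
    congr 1; ring
  constructor
  · ext v
    simp only [mem_range, mem_setOf_eq]
    constructor
    · rintro ⟨⟨⟨h, hh1, hh2⟩, a, b, c⟩, rfl⟩
      simp only
      have hcs := Real.Angle.cos_sq_add_sin_sq (n • b)
      have hsum : (h * Real.Angle.cos (n • b)) ^ 2 + (h * Real.Angle.sin (n • b)) ^ 2 = h ^ 2 := by
        nlinarith [hcs]
      rw [hsum, Real.sqrt_sq (by linarith)]
      exact ⟨hh1, hh2⟩
    · rintro ⟨h1, h2⟩
      set r := Real.sqrt (v.1 ^ 2 + v.2 ^ 2) with hrdef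
      have hr0 : (0:ℝ) < r := by linarith
      have hz : (⟨v.1, v.2⟩ : ℂ) ≠ 0 := by
        intro h
        rw [Complex.ext_iff] at h
        simp only [Complex.zero_re, Complex.zero_im] at h
        rw [hrdef, h.1, h.2] at hr0
        norm_num at hr0
      refine ⟨(⟨r, h1, h2⟩, 0, ((Complex.arg ⟨v.1, v.2⟩ / n : ℝ) : Real.Angle), 0), ?_⟩
      have hsmul : n • (((Complex.arg ⟨v.1, v.2⟩ / n : ℝ)) : Real.Angle)
          = ((Complex.arg ⟨v.1, v.2⟩ : ℝ) : Real.Angle) := by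
        rw [← Real.Angle.coe_nsmul, nsmul_eq_mul, mul_div_cancel₀ _ hnR]
      simp only [hsmul, Real.Angle.cos_coe, Real.Angle.sin_coe, Complex.cos_arg hz,
        Complex.sin_arg, habs v]
      exact Prod.ext (by rw [← hrdef]; exact mul_div_cancel₀ _ hr0.ne')
        (by rw [← hrdef]; exact mul_div_cancel₀ _ hr0.ne')
  · intro v h1 h2
    set r := Real.sqrt (v.1 ^ 2 + v.2 ^ 2) with hrdef
    have hr0 : (0:ℝ) < r := by linarith
    have hrIcc : r ∈ Set.Icc (1:ℝ) 2 := ⟨le_of_lt h1, le_of_lt h2⟩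
    have hz : (⟨v.1, v.2⟩ : ℂ) ≠ 0 := by
      intro h
      rw [Complex.ext_iff] at h
      simp only [Complex.zero_re, Complex.zero_im] at h
      rw [hrdef, h.1, h.2] at hr0
      norm_num at hr0
    set θv : Real.Angle := ((Complex.arg ⟨v.1, v.2⟩ : ℝ) : Real.Angle) with hθv
    have hθcos : θv.cos = v.1 / r := by
      rw [hθv, Real.Angle.cos_coe, Complex.cos_arg hz, habs v]
    have hθsin : θv.sin = v.2 / r := by
      rw [hθv, Real.Angle.sin_coe, Complex.sin_arg, habs v]
    -- fiber characterization
    have hfib : (fun p : (Set.Icc (1:ℝ) 2 × Real.Angle × Real.Angle × Real.Angle) =>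
          ((p.1 : ℝ) * Real.Angle.cos (n • p.2.2.1), (p.1 : ℝ) * Real.Angle.sin (n • p.2.2.1)))
          ⁻¹' {v}
        = {p : (Set.Icc (1:ℝ) 2 × Real.Angle × Real.Angle × Real.Angle) |
            (p.1 : ℝ) = r ∧ n • p.2.2.1 = θv} := by
      ext ⟨⟨h, hh1, hh2⟩, a, b, c⟩
      simp only [mem_preimage, mem_singleton_iff, mem_setOf_eq, Prod.ext_iff]
      constructor
      · rintro ⟨e1, e2⟩
        have hcs := Real.Angle.cos_sq_add_sin_sq (n • b)
        have hsq : v.1 ^ 2 + v.2 ^ 2 = h ^ 2 := by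
          rw [← e1, ← e2]; nlinarith [hcs]
        have hhr : (⟨h, hh1, hh2⟩ : Set.Icc (1:ℝ) 2).val = r := by
          rw [hrdef, hsq, Real.sqrt_sq (by linarith)]
        refine ⟨hhr, ?_⟩
        have hhr' : h = r := hhr
        refine angle_eq_of_cos_sin ?_ ?_
        · rw [hθcos, ← e1, hhr']; field_simp
        · rw [hθsin, ← e2, hhr']; field_simp
      · rintro ⟨e1, e2⟩
        have e1' : h = r := e1
        rw [e1', e2, hθcos, hθsin]
        constructor <;> field_simp
    haveI hSfin : Finite {b : Real.Angle // n • b = θv} :=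
      Nat.finite_of_card_ne_zero (by rw [card_solutions n hn θv]; omega)
    rw [hfib]
    set K : Set (Set.Icc (1:ℝ) 2 × Real.Angle × Real.Angle × Real.Angle) :=
      {p : (Set.Icc (1:ℝ) 2 × Real.Angle × Real.Angle × Real.Angle) |
        (p.1 : ℝ) = r ∧ n • p.2.2.1 = θv} with hKdef
    constructor
    · -- number of connected components
      have hg : Continuous (fun p : ↥K => (⟨p.val.2.2.1, p.2.2⟩ : {b : Real.Angle // n • b = θv})) :=
        Continuous.subtype_mk (continuous_subtype_val.snd.snd.fst) _
      have hsurj : Function.Surjective hg.connectedComponentsLift := by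
        rintro ⟨b, hb⟩
        exact ⟨ConnectedComponents.mk ⟨(⟨r, hrIcc⟩, 0, b, 0), ⟨rfl, hb⟩⟩,
          by rw [hg.connectedComponentsLift_apply_coe]⟩
      have hinj : Function.Injective hg.connectedComponentsLift := by
        intro x y hxy
        obtain ⟨p, rfl⟩ := ConnectedComponents.surjective_coe x
        obtain ⟨q, rfl⟩ := ConnectedComponents.surjective_coe y
        rw [hg.connectedComponentsLift_apply_coe, hg.connectedComponentsLift_apply_coe] at hxy
        have hb : p.val.2.2.1 = q.val.2.2.1 := congrArg Subtype.val hxy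
        rw [ConnectedComponents.coe_eq_coe']
        have hφc : Continuous (fun ac : Real.Angle × Real.Angle =>
            (⟨(⟨r, hrIcc⟩, ac.1, q.val.2.2.1, ac.2), ⟨rfl, q.2.2⟩⟩ : ↥K)) := by
          apply Continuous.subtype_mk
          exact (continuous_const.prodMk (continuous_fst.prodMk
            (continuous_const.prodMk continuous_snd)))
        have hrange := isPreconnected_range hφc
        have hmem : ∀ w : ↥K, w.val.2.2.1 = q.val.2.2.1 →
            w ∈ range (fun ac : Real.Angle × Real.Angle =>
              (⟨(⟨r, hrIcc⟩, ac.1, q.val.2.2.1, ac.2), ⟨rfl, q.2.2⟩⟩ : ↥K)) := by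
          intro w hw
          refine ⟨(w.val.2.1, w.val.2.2.2), ?_⟩
          apply Subtype.ext
          refine Prod.ext ?_ (Prod.ext rfl (Prod.ext ?_ rfl))
          · exact (Subtype.ext w.2.1).symm
          · exact hw.symm
        exact hrange.subset_connectedComponent (hmem q rfl) (hmem p hb)
      calc Nat.card (ConnectedComponents ↥K)
          = Nat.card {b : Real.Angle // n • b = θv} :=
            Nat.card_congr (Equiv.ofBijective _ ⟨hinj, hsurj⟩)
        _ = n := card_solutions n hn θv
    · -- each component is a 2-torus
      intro x hx
      obtain ⟨hx1, hx2⟩ : (x.1 : ℝ) = r ∧ n • x.2.2.1 = θv := hx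
      have hψc : Continuous (fun ac : Real.Angle × Real.Angle =>
          ((x.1, ac.1, x.2.2.1, ac.2) :
            Set.Icc (1:ℝ) 2 × Real.Angle × Real.Angle × Real.Angle)) :=
        continuous_const.prodMk (continuous_fst.prodMk
          (continuous_const.prodMk continuous_snd))
      have hEq : connectedComponentIn K x = range (fun ac : Real.Angle × Real.Angle =>
          ((x.1, ac.1, x.2.2.1, ac.2) :
            Set.Icc (1:ℝ) 2 × Real.Angle × Real.Angle × Real.Angle)) := by
        apply Subset.antisymm
        · intro p hp
          have hpK : p ∈ K := connectedComponentIn_subset _ _ hp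
          have hb : p.2.2.1 = x.2.2.1 := by
            have hfin : ({b : Real.Angle | n • b = θv}).Finite := Set.finite_coe_iff.mp hSfin
            have himg : ((fun q : (Set.Icc (1:ℝ) 2 × Real.Angle × Real.Angle × Real.Angle) =>
                q.2.2.1) '' connectedComponentIn K x) ⊆ {b | n • b = θv} := by
              rintro _ ⟨q, hq, rfl⟩
              exact (connectedComponentIn_subset _ _ hq).2
            have hpre : IsPreconnected ((fun q : (Set.Icc (1:ℝ) 2 × Real.Angle × Real.Angle ×
                Real.Angle) => q.2.2.1) '' connectedComponentIn K x) :=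
              isPreconnected_connectedComponentIn.image _
                (continuous_snd.snd.fst).continuousOn
            exact finite_preconnected_subsingleton (hfin.subset himg) hpre
              ⟨p, hp, rfl⟩ ⟨x, mem_connectedComponentIn ⟨hx1, hx2⟩, rfl⟩
          refine ⟨(p.2.1, p.2.2.2), ?_⟩
          refine Prod.ext ?_ (Prod.ext rfl (Prod.ext ?_ rfl))
          · exact Subtype.ext (hx1.trans hpK.1.symm)
          · exact hb.symm
        · refine IsPreconnected.subset_connectedComponentIn (isPreconnected_range hψc) ?_ ?_
          · exact ⟨(x.2.1, x.2.2.2), rfl⟩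
          · rintro _ ⟨ac, rfl⟩
            exact ⟨hx1, hx2⟩
      rw [hEq]
      exact ⟨{ toFun := fun q => (q.val.2.1, q.val.2.2.2),
               invFun := fun ac => ⟨(x.1, ac.1, x.2.2.1, ac.2), mem_range_self ac⟩,
               left_inv := by rintro ⟨_, ac, rfl⟩; rfl,
               right_inv := fun ac => rfl,
               continuous_toFun := (continuous_subtype_val.snd.fst).prodMk
                 (continuous_subtype_val.snd.snd.snd),
               continuous_invFun := Continuous.subtype_mk
                 (continuous_const.prodMk (continuous_fst.prodMk
                   (continuous_const.prodMk continuous_snd))) _ }⟩
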